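/- Let F = (F_1, …, F_r) be a holomorphic vector-valued modular form of weight 0 with respect to a representation ρ : SL(2,ℤ) → GL(r,ℂ), such that all Fourier coefficients a_i(n) of every component F_i are non-negative real numbers. Then F is constant, i.e. each component function F_i is a constant function on ℍ (equivalently, a_i(n) = 0 for all n ≥ 1 and all i). -/

import Mathlib

/- STATEMENT 1: A holomorphic vector-valued modular form of weight 0 for a
representation `ρ : SL(2,ℤ) → GL(r,ℂ)` all of whose Fourier coefficients are
non-negative real numbers is constant: each component `F_i` is a constant
function on `ℍ`; equivalently `a_i(n) = 0` for all `n ≥ 1` and all `i`. -/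

open UpperHalfPlane Complex Matrix
open scoped Manifold Real

namespace VVMFConstAux

open Filter Topology

noncomputable def trm (a : ℕ → ℝ) (N : ℕ+) (z : ℂ) (n : ℕ) : ℂ :=
  (a n : ℂ) * Complex.exp (2 * π * Complex.I * (n : ℂ) * z / (N : ℂ))

lemma im_I_mul (t : ℝ) : (Complex.I * (t : ℂ)).im = t := by simp

lemma re_arg (n : ℕ) (N : ℕ+) (z : ℂ) :
    (2 * (π : ℂ) * Complex.I * (n : ℂ) * z / (N : ℂ)).re
      = -(2 * π * n * z.im) / ((N : ℕ) : ℝ) := by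
  have h : 2 * (π : ℂ) * Complex.I * (n : ℂ) * z / (N : ℂ)
      = ((2 * π * n / ((N : ℕ) : ℝ) : ℝ) : ℂ) * (Complex.I * z) := by
    push_cast; ring
  rw [h, Complex.re_ofReal_mul]
  simp only [Complex.mul_re, Complex.I_re, Complex.I_im, zero_mul, one_mul, zero_sub]
  ring

lemma norm_trm (a : ℕ → ℝ) (ha : ∀ n, 0 ≤ a n) (N : ℕ+) (z : ℂ) (n : ℕ) :
    ‖trm a N z n‖ = a n * Real.exp (-(2 * π * n * z.im) / ((N : ℕ) : ℝ)) := by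
  rw [trm, norm_mul, Complex.norm_real, Real.norm_eq_abs, _root_.abs_of_nonneg (ha n),
    Complex.norm_exp, re_arg]

lemma norm_trm_le (a : ℕ → ℝ) (ha : ∀ n, 0 ≤ a n) (N : ℕ+) {z : ℂ} (hz : 0 ≤ z.im) (n : ℕ) :
    ‖trm a N z n‖ ≤ a n := by
  rw [norm_trm a ha]
  nth_rewrite 2 [← mul_one (a n)]
  apply mul_le_mul_of_nonneg_left _ (ha n)
  rw [Real.exp_le_one_iff]
  apply div_nonpos_of_nonpos_of_nonneg (neg_nonpos.2 (by positivity)) (by positivity)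

lemma trm_ofReal (a : ℕ → ℝ) (N : ℕ+) (t : ℝ) (n : ℕ) :
    trm a N (Complex.I * t) n
      = ((a n * Real.exp (-(2 * π * n * t) / ((N : ℕ) : ℝ)) : ℝ) : ℂ) := by
  have h : 2 * (π : ℂ) * Complex.I * (n : ℂ) * (Complex.I * t) / (N : ℂ)
      = ((-(2 * π * n * t) / ((N : ℕ) : ℝ) : ℝ) : ℂ) := by
    push_cast
    linear_combination (2 * (π : ℂ) * n * t / ((N : ℕ) : ℂ)) * Complex.I_sq
  rw [trm, h, ← Complex.ofReal_exp, ← Complex.ofReal_mul]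

lemma trm_periodic (a : ℕ → ℝ) (N : ℕ+) (z : ℂ) (k n : ℕ) :
    trm a N (z + ((k * (N : ℕ) : ℕ) : ℂ)) n = trm a N z n := by
  have hN : ((N : ℕ) : ℂ) ≠ 0 := by
    exact_mod_cast Nat.cast_ne_zero.2 N.ne_zero
  have h : 2 * (π : ℂ) * Complex.I * (n : ℂ) * (z + ((k * (N : ℕ) : ℕ) : ℂ)) / (N : ℂ)
      = 2 * (π : ℂ) * Complex.I * (n : ℂ) * z / (N : ℂ)
        + (((n * k : ℕ) : ℤ) : ℂ) * (2 * π * Complex.I) := by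
    push_cast
    field_simp
  rw [trm, trm, h, Complex.exp_add, Complex.exp_int_mul_two_pi_mul_I, mul_one]

lemma summable_trm (a : ℕ → ℝ) (ha : ∀ n, 0 ≤ a n) (hs : Summable a) (N : ℕ+) {z : ℂ}
    (hz : 0 ≤ z.im) : Summable (trm a N z) :=
  Summable.of_norm_bounded hs (norm_trm_le a ha N hz)

noncomputable def Gf (a : ℕ → ℝ) (N : ℕ+) (z : ℂ) : ℂ := ∑' n, trm a N z n

lemma Gf_continuousOn (a : ℕ → ℝ) (ha : ∀ n, 0 ≤ a n) (hs : Summable a) (N : ℕ+) :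
    ContinuousOn (Gf a N) {z : ℂ | 0 ≤ z.im} := by
  apply continuousOn_tsum (u := a) (fun n => Continuous.continuousOn ?_) hs
    (fun n z hz => norm_trm_le a ha N hz n)
  unfold trm
  fun_prop

lemma Gf_zero (a : ℕ → ℝ) (N : ℕ+) : Gf a N 0 = ((∑' n, a n : ℝ) : ℂ) := by
  rw [Gf, Complex.ofReal_tsum]
  exact tsum_congr fun n => by rw [trm]; simp


lemma Gf_tendsto_atTop (a : ℕ → ℝ) (ha : ∀ n, 0 ≤ a n) (hs : Summable a) (N : ℕ+) :
    Tendsto (fun t : ℝ => Gf a N (Complex.I * t)) atTop (𝓝 ((a 0 : ℝ) : ℂ)) := by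
  have hsK : Summable fun n => a (n + 1) := (summable_nat_add_iff 1).2 hs
  set K : ℝ := ∑' n, a (n + 1) with hK
  have key : ∀ t : ℝ, 0 ≤ t →
      ‖Gf a N (Complex.I * t) - ((a 0 : ℝ) : ℂ)‖ ≤ K * Real.exp (-(2 * π * t) / ((N : ℕ) : ℝ)) := by
    intro t ht
    have him : (0 : ℝ) ≤ (Complex.I * (t : ℂ)).im := by rw [im_I_mul]; exact ht
    have h1 : HasSum (trm a N (Complex.I * t)) (Gf a N (Complex.I * t)) :=
      (summable_trm a ha hs N him).hasSum
    have hf0 : trm a N (Complex.I * t) 0 = ((a 0 : ℝ) : ℂ) := by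
      rw [trm]; simp
    have h2 : HasSum (fun n => trm a N (Complex.I * t) (n + 1))
        (Gf a N (Complex.I * t) - ((a 0 : ℝ) : ℂ)) := by
      rw [hasSum_nat_add_iff 1, Finset.range_one, Finset.sum_singleton, hf0,
        sub_add_cancel]
      exact h1
    have hns : Summable (fun n => ‖trm a N (Complex.I * t) (n + 1)‖) :=
      Summable.of_nonneg_of_le (fun n => norm_nonneg _)
        (fun n => norm_trm_le a ha N him (n + 1)) hsK
    calc ‖Gf a N (Complex.I * t) - ((a 0 : ℝ) : ℂ)‖
        = ‖∑' n, trm a N (Complex.I * t) (n + 1)‖ := by rw [h2.tsum_eq]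
      _ ≤ ∑' n, ‖trm a N (Complex.I * t) (n + 1)‖ := norm_tsum_le_tsum_norm hns
      _ ≤ ∑' n, a (n + 1) * Real.exp (-(2 * π * t) / ((N : ℕ) : ℝ)) := by
          apply Summable.tsum_le_tsum _ hns (hsK.mul_right _)
          intro n
          rw [norm_trm a ha, im_I_mul]
          apply mul_le_mul_of_nonneg_left _ (ha (n + 1))
          rw [Real.exp_le_exp]
          apply div_le_div_of_nonneg_right _ (by positivity : (0:ℝ) ≤ ((N : ℕ) : ℝ))
          push_cast
          nlinarith [mul_nonneg (mul_nonneg Real.pi_pos.le (Nat.cast_nonneg n : (0:ℝ) ≤ n)) ht]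
      _ = K * Real.exp (-(2 * π * t) / ((N : ℕ) : ℝ)) := tsum_mul_right
  have hup : Tendsto (fun t : ℝ => K * Real.exp (-(2 * π * t) / ((N : ℕ) : ℝ))) atTop (𝓝 0) := by
    rw [show (0 : ℝ) = K * 0 by ring]
    apply Tendsto.const_mul
    apply Real.tendsto_exp_atBot.comp
    have h1 : Tendsto (fun t : ℝ => (2 * π / ((N : ℕ) : ℝ)) * t) atTop atTop :=
      Tendsto.const_mul_atTop (by positivity) tendsto_id
    have h2 := tendsto_neg_atTop_atBot.comp h1
    apply h2.congr
    intro t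
    simp only [Function.comp_apply]
    ring
  have h3 : Tendsto (fun t : ℝ => Gf a N (Complex.I * t) - ((a 0 : ℝ) : ℂ)) atTop (𝓝 0) :=
    squeeze_zero_norm' (by filter_upwards [eventually_ge_atTop (0 : ℝ)] using key) hup
  have h4 := h3.add_const ((a 0 : ℝ) : ℂ)
  simpa using h4

end VVMFConstAux


open VVMFConstAux Filter Topology


theorem holomorphic_vvmf_weight_zero_nonneg_coeffs_constant
    (r : ℕ) (hr : 0 < r)
    (ρ : Matrix.SpecialLinearGroup (Fin 2) ℤ →* Matrix.GeneralLinearGroup (Fin r) ℂ)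
    (F : Fin r → ℍ → ℂ) (N : Fin r → ℕ+) (a : Fin r → ℕ → ℝ)
    (hnonneg : ∀ i n, 0 ≤ a i n)
    (hhol : ∀ i, MDifferentiable 𝓘(ℂ) 𝓘(ℂ) (F i))
    (hexp : ∀ (i : Fin r) (τ : ℍ),
      HasSum (fun n : ℕ =>
        (a i n : ℂ) * Complex.exp (2 * π * Complex.I * (n : ℂ) * (τ : ℂ) / (N i : ℂ))) (F i τ))
    (htrans : ∀ (γ : Matrix.SpecialLinearGroup (Fin 2) ℤ) (τ : ℍ) (i : Fin r),
      (((γ : Matrix (Fin 2) (Fin 2) ℤ) 1 0 : ℂ) * (τ : ℂ)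
          + ((γ : Matrix (Fin 2) (Fin 2) ℤ) 1 1 : ℂ)) ^ (-((0 : ℝ) : ℂ)) * F i (γ • τ)
        = ∑ j : Fin r, ((ρ γ : Matrix (Fin r) (Fin r) ℂ) i j) * F j τ) :
    (∀ (i : Fin r) (τ₁ τ₂ : ℍ), F i τ₁ = F i τ₂) ∧
    (∀ (i : Fin r) (n : ℕ), 1 ≤ n → a i n = 0) := by
  -- simplified transformation law
  have htr : ∀ (γ : Matrix.SpecialLinearGroup (Fin 2) ℤ) (τ : ℍ) (i : Fin r),
      F i (γ • τ) = ∑ j : Fin r, ((ρ γ : Matrix (Fin r) (Fin r) ℂ) i j) * F j τ := by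
    intro γ τ i
    have h := htrans γ τ i
    rwa [show (-((0 : ℝ) : ℂ)) = 0 by norm_num, Complex.cpow_zero, one_mul] at h
  have hexp' : ∀ (i : Fin r) (τ : ℍ), HasSum (trm (a i) (N i) ↑τ) (F i τ) := hexp
  -- real form of Fourier expansion on the imaginary axis
  have hre : ∀ (i : Fin r) (t : ℝ) (τ : ℍ), (τ : ℂ) = Complex.I * t →
      HasSum (fun n => a i n * Real.exp (-(2 * π * n * t) / ((N i : ℕ) : ℝ))) ((F i τ).re)
        ∧ F i τ = (((F i τ).re : ℝ) : ℂ) := by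
    intro i t τ hτ
    have h1 : HasSum
        (fun n => ((a i n * Real.exp (-(2 * π * n * t) / ((N i : ℕ) : ℝ)) : ℝ) : ℂ)) (F i τ) := by
      have he : trm (a i) (N i) ↑τ
          = fun n => ((a i n * Real.exp (-(2 * π * n * t) / ((N i : ℕ) : ℝ)) : ℝ) : ℂ) := by
        funext n; rw [hτ, trm_ofReal]
      exact he ▸ hexp' i τ
    have h2 : HasSum (fun n => a i n * Real.exp (-(2 * π * n * t) / ((N i : ℕ) : ℝ)))
        ((F i τ).re) := by
      have := Complex.reCLM.hasSum h1
      simpa only [Complex.reCLM_apply, Complex.ofReal_re] using this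
    refine ⟨h2, h1.unique ?_⟩
    have := Complex.ofRealCLM.hasSum h2
    simpa only [Complex.ofRealCLM_apply] using this
  -- nonnegativity of F on the imaginary axis
  have hrepos : ∀ (j : Fin r) (t : ℝ) (τ : ℍ), (τ : ℂ) = Complex.I * t → 0 ≤ (F j τ).re :=
    fun j t τ hτ => hasSum_le (fun n => mul_nonneg (hnonneg j n) (Real.exp_nonneg _)) hasSum_zero (hre j t τ hτ).1
  -- summability of the coefficients
  have hsum : ∀ i, Summable (a i) := by
    intro i
    have hτ1im : (0:ℝ) < (Complex.I * ((1:ℝ):ℂ)).im := by rw [im_I_mul]; norm_num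
    set τ1 : ℍ := UpperHalfPlane.mk (Complex.I * ((1:ℝ):ℂ)) hτ1im with hτ1
    have hτ1c : (τ1 : ℂ) = Complex.I * ((1:ℝ):ℂ) := rfl
    set C : ℝ := ∑ j, ‖(ρ ModularGroup.S : Matrix (Fin r) (Fin r) ℂ) i j‖ * (F j τ1).re with hC
    have hmono : ∀ (j : Fin r) (t : ℝ), 1 ≤ t → ∀ (τ : ℍ), (τ : ℂ) = Complex.I * (t:ℝ) →
        (F j τ).re ≤ (F j τ1).re := by
      intro j t ht τ hτ
      refine hasSum_le (fun n => ?_) (hre j t τ hτ).1 (hre j 1 τ1 hτ1c).1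
      apply mul_le_mul_of_nonneg_left _ (hnonneg j n)
      rw [Real.exp_le_exp]
      apply div_le_div_of_nonneg_right _ (by positivity : (0:ℝ) ≤ ((N j : ℕ) : ℝ))
      nlinarith [mul_nonneg (mul_nonneg Real.pi_pos.le (Nat.cast_nonneg n : (0:ℝ) ≤ n))
        (by linarith : (0:ℝ) ≤ t - 1)]
    have hb : ∀ (M : ℕ), 1 ≤ M → ∀ (τ : ℍ), (τ : ℂ) = Complex.I * ((((M:ℝ))⁻¹ : ℝ) : ℂ) →
        (F i τ).re ≤ C := by
      intro M hM τ hτ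
      have hMpos : (0:ℝ) < (M:ℝ) := by exact_mod_cast hM
      have hM0 : ((M:ℝ):ℂ) ≠ 0 := by exact_mod_cast hMpos.ne'
      have hτ'im : (0:ℝ) < (Complex.I * (((M:ℝ):ℝ):ℂ)).im := by rw [im_I_mul]; exact hMpos
      set τ' : ℍ := UpperHalfPlane.mk (Complex.I * (((M:ℝ):ℝ):ℂ)) hτ'im with hτ'def
      have hτ'c : (τ' : ℂ) = Complex.I * ((M:ℝ):ℂ) := rfl
      have hS : ModularGroup.S • τ' = τ := by
        apply UpperHalfPlane.ext
        rw [UpperHalfPlane.modular_S_smul, UpperHalfPlane.coe_mk, hτ'c, hτ]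
        have hone : Complex.I * ((((M:ℝ))⁻¹ : ℝ) : ℂ) * -(Complex.I * ((M:ℝ):ℂ)) = 1 := by
          have hM0' : ((M:ℕ):ℂ) ≠ 0 := by exact_mod_cast hMpos.ne'
          push_cast
          rw [show Complex.I * ((M:ℂ))⁻¹ * -(Complex.I * (M:ℂ))
              = -(Complex.I*Complex.I) * (((M:ℂ))⁻¹ * (M:ℂ)) from by ring,
            inv_mul_cancel₀ hM0', Complex.I_mul_I]
          norm_num
        exact inv_eq_of_mul_eq_one_left hone
      have htri := htr ModularGroup.S τ' i
      rw [hS] at htri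
      calc (F i τ).re ≤ ‖F i τ‖ := by exact Complex.re_le_norm _
        _ = ‖∑ j, ((ρ ModularGroup.S : Matrix (Fin r) (Fin r) ℂ) i j) * F j τ'‖ := by rw [htri]
        _ ≤ ∑ j, ‖((ρ ModularGroup.S : Matrix (Fin r) (Fin r) ℂ) i j) * F j τ'‖ :=
            norm_sum_le _ _
        _ ≤ C := by
            rw [hC]
            apply Finset.sum_le_sum
            intro j _
            rw [norm_mul]
            apply mul_le_mul_of_nonneg_left _ (norm_nonneg _)
            have h2 := (hre j (M:ℝ) τ' hτ'c).2
            rw [h2, Complex.norm_real, Real.norm_eq_abs,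
              _root_.abs_of_nonneg (hrepos j (M:ℝ) τ' hτ'c)]
            exact hmono j (M:ℝ) (by exact_mod_cast hM) τ' hτ'c
    have hCpos : 0 ≤ C :=
      Finset.sum_nonneg fun j _ => mul_nonneg (norm_nonneg _) (hrepos j 1 τ1 hτ1c)
    apply summable_of_sum_range_le (c := Real.exp (2*π) * C) (hnonneg i)
    intro M
    rcases Nat.eq_zero_or_pos M with hM | hM
    · rw [hM]
      simp only [Finset.range_zero, Finset.sum_empty]
      exact mul_nonneg (Real.exp_pos _).le hCpos
    · have hMpos : (0:ℝ) < (M:ℝ) := by exact_mod_cast hM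
      have him : (0:ℝ) < (Complex.I * (((((M:ℝ))⁻¹ : ℝ)):ℂ)).im := by rw [im_I_mul]; positivity
      set τM : ℍ := UpperHalfPlane.mk (Complex.I * (((((M:ℝ))⁻¹ : ℝ)):ℂ)) him with hτM
      have hcoe : (τM : ℂ) = Complex.I * (((((M:ℝ))⁻¹ : ℝ)):ℂ) := rfl
      have h1 := (hre i ((M:ℝ))⁻¹ τM hcoe).1
      have h2 : ∑ n ∈ Finset.range M, (a i n * Real.exp (-(2*π*n*((M:ℝ))⁻¹)/((N i:ℕ):ℝ)))
          ≤ (F i τM).re :=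
        sum_le_hasSum _ (fun n _ => mul_nonneg (hnonneg i n) (Real.exp_nonneg _)) h1
      have h3 : ∑ n ∈ Finset.range M, a i n
          ≤ Real.exp (2*π)
            * ∑ n ∈ Finset.range M, (a i n * Real.exp (-(2*π*n*((M:ℝ))⁻¹)/((N i:ℕ):ℝ))) := by
        rw [Finset.mul_sum]
        apply Finset.sum_le_sum
        intro n hn
        have hrw : Real.exp (2*π) * (a i n * Real.exp (-(2*π*n*((M:ℝ))⁻¹)/((N i:ℕ):ℝ)))
            = a i n * Real.exp (-(2*π*n*((M:ℝ))⁻¹)/((N i:ℕ):ℝ) + 2*π) := by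
          rw [Real.exp_add]; ring
        rw [hrw]
        nth_rewrite 1 [← mul_one (a i n)]
        apply mul_le_mul_of_nonneg_left _ (hnonneg i n)
        apply Real.one_le_exp
        have hn' : (n:ℝ) ≤ (M:ℝ) := by exact_mod_cast (Finset.mem_range.1 hn).le
        have hN1 : (1:ℝ) ≤ ((N i:ℕ):ℝ) := by exact_mod_cast (N i).one_le
        have hx : 2*π*(n:ℝ)*((M:ℝ))⁻¹/((N i:ℕ):ℝ) ≤ 2*π := by
          have h5 : 2*π*(n:ℝ)*((M:ℝ))⁻¹ ≤ 2*π := by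
            rw [← div_eq_mul_inv, div_le_iff₀ hMpos]
            nlinarith [Real.pi_pos, hn']
          calc 2*π*(n:ℝ)*((M:ℝ))⁻¹/((N i:ℕ):ℝ) ≤ 2*π*(n:ℝ)*((M:ℝ))⁻¹ :=
                div_le_self (by positivity) hN1
            _ ≤ 2*π := h5
        have hneg : -(2*π*(n:ℝ)*((M:ℝ))⁻¹)/((N i:ℕ):ℝ)
            = -(2*π*(n:ℝ)*((M:ℝ))⁻¹/((N i:ℕ):ℝ)) := by ring
        rw [hneg]; linarith
      calc ∑ n ∈ Finset.range M, a i n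
          ≤ Real.exp (2*π)
            * ∑ n ∈ Finset.range M, (a i n * Real.exp (-(2*π*n*((M:ℝ))⁻¹)/((N i:ℕ):ℝ))) := h3
        _ ≤ Real.exp (2*π) * (F i τM).re := mul_le_mul_of_nonneg_left h2 (Real.exp_pos _).le
        _ ≤ Real.exp (2*π) * C :=
            mul_le_mul_of_nonneg_left (hb M hM τM hcoe) (Real.exp_pos _).le
  -- F in terms of Gf
  have hFG : ∀ (i : Fin r) (τ : ℍ), F i τ = Gf (a i) (N i) ↑τ :=
    fun i τ => (hexp' i τ).tsum_eq.symm
  -- key limit lemma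
  have hlim : ∀ (i : Fin r) (u : ℕ → ℍ), Tendsto (fun m => ((u m : ℂ))) atTop (𝓝 0) →
      Tendsto (fun m => F i (u m)) atTop (𝓝 (Gf (a i) (N i) 0)) := by
    intro i u hu
    have hc : ContinuousWithinAt (Gf (a i) (N i)) {z : ℂ | 0 ≤ z.im} 0 :=
      (Gf_continuousOn (a i) (hnonneg i) (hsum i) (N i)).continuousWithinAt (by simp)
    have h1 : Tendsto (fun m => ((u m : ℂ))) atTop (𝓝[{z : ℂ | 0 ≤ z.im}] 0) :=
      tendsto_nhdsWithin_iff.2 ⟨hu, Eventually.of_forall fun m => le_of_lt (u m).2⟩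
    exact (hc.tendsto.comp h1).congr fun m => (hFG i (u m)).symm
  -- relation 1 : L = ρ(S) a₀
  have hrel1 : ∀ i, Gf (a i) (N i) 0
      = ∑ j, ((ρ ModularGroup.S : Matrix (Fin r) (Fin r) ℂ) i j) * ((a j 0 : ℝ) : ℂ) := by
    intro i
    have himm : ∀ m : ℕ, (0:ℝ) < (Complex.I * ((((m:ℝ)+1) : ℝ) : ℂ)).im := by
      intro m; rw [im_I_mul]; positivity
    set σ : ℕ → ℍ := fun m => UpperHalfPlane.mk (Complex.I * ((((m:ℝ)+1) : ℝ) : ℂ)) (himm m)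
      with hσ
    set u : ℕ → ℍ := fun m => ModularGroup.S • σ m with hu
    have hucoe : ∀ m, ((u m : ℂ)) = (-(Complex.I * ((((m:ℝ)+1) : ℝ) : ℂ)))⁻¹ := by
      intro m
      rw [hu]
      simp only
      rw [UpperHalfPlane.modular_S_smul]
    have hLHS : Tendsto (fun m => F i (u m)) atTop (𝓝 (Gf (a i) (N i) 0)) := by
      apply hlim i u
      apply squeeze_zero_norm (a := fun m : ℕ => ((m:ℝ)+1)⁻¹)
      · intro m
        rw [hucoe m, norm_inv, norm_neg, norm_mul, Complex.norm_I, one_mul, Complex.norm_real,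
          Real.norm_eq_abs, _root_.abs_of_nonneg (by positivity : (0:ℝ) ≤ (m:ℝ)+1)]
      · have := tendsto_one_div_add_atTop_nhds_zero_nat (𝕜 := ℝ)
        simpa [one_div] using this
    have hRHS : Tendsto
        (fun m => ∑ j, ((ρ ModularGroup.S : Matrix (Fin r) (Fin r) ℂ) i j) * F j (σ m)) atTop
        (𝓝 (∑ j, ((ρ ModularGroup.S : Matrix (Fin r) (Fin r) ℂ) i j) * ((a j 0 : ℝ) : ℂ))) := by
      apply tendsto_finset_sum
      intro j _
      apply Tendsto.const_mul
      have h1 := Gf_tendsto_atTop (a j) (hnonneg j) (hsum j) (N j)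
      have h2 : Tendsto (fun m : ℕ => ((m:ℝ)+1)) atTop atTop :=
        tendsto_atTop_add_const_right atTop 1 tendsto_natCast_atTop_atTop
      exact (h1.comp h2).congr fun m => (hFG j (σ m)).symm
    have heq : ∀ m, F i (u m)
        = ∑ j, ((ρ ModularGroup.S : Matrix (Fin r) (Fin r) ℂ) i j) * F j (σ m) :=
      fun m => htr ModularGroup.S (σ m) i
    exact tendsto_nhds_unique (hLHS.congr heq) hRHS
  -- relation 2 : L = ρ(S) L
  have hrel2 : ∀ i, Gf (a i) (N i) 0
      = ∑ j, ((ρ ModularGroup.S : Matrix (Fin r) (Fin r) ℂ) i j) * Gf (a j) (N j) 0 := by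
    intro i
    set Q : ℕ := ∏ j : Fin r, ((N j : ℕ)) with hQdef
    have hQpos : 0 < Q := Finset.prod_pos fun j _ => (N j).pos
    have hdvd : ∀ j, ((N j : ℕ)) ∣ Q := fun j => Finset.dvd_prod_of_mem _ (Finset.mem_univ j)
    have hper : ∀ (j : Fin r) (k : ℕ) (τ τ' : ℍ),
        (τ' : ℂ) = ↑τ + ((k * (N j : ℕ) : ℕ) : ℂ) → F j τ' = F j τ := by
      intro j k τ τ' h
      have he : trm (a j) (N j) ↑τ' = trm (a j) (N j) ↑τ := by
        funext n; rw [h, trm_periodic]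
      exact ((he ▸ hexp' j τ') : HasSum (trm (a j) (N j) ↑τ) (F j τ')).unique (hexp' j τ)
    have himm : ∀ m : ℕ, (0:ℝ) < (Complex.I * ((((m:ℝ)+1)⁻¹ : ℝ) : ℂ)).im := by
      intro m; rw [im_I_mul]; positivity
    set σ : ℕ → ℍ := fun m => UpperHalfPlane.mk (Complex.I * ((((m:ℝ)+1)⁻¹ : ℝ) : ℂ)) (himm m)
      with hσ
    have himm2 : ∀ m : ℕ,
        (0:ℝ) < (((((m+1)*Q : ℕ)) : ℂ) + Complex.I * ((((m:ℝ)+1)⁻¹ : ℝ) : ℂ)).im := by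
      intro m
      rw [Complex.add_im, im_I_mul, Complex.natCast_im, zero_add]
      positivity
    set τ2 : ℕ → ℍ := fun m =>
      UpperHalfPlane.mk (((((m+1)*Q : ℕ)) : ℂ) + Complex.I * ((((m:ℝ)+1)⁻¹ : ℝ) : ℂ)) (himm2 m)
      with hτ2
    have hFper : ∀ (j : Fin r) (m : ℕ), F j (τ2 m) = F j (σ m) := by
      intro j m
      apply hper j ((m+1)*(Q/(N j : ℕ)))
      show ((((m+1)*Q : ℕ)) : ℂ) + Complex.I * ((((m:ℝ)+1)⁻¹ : ℝ) : ℂ)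
        = Complex.I * ((((m:ℝ)+1)⁻¹ : ℝ) : ℂ) + _
      rw [show ((m+1)*(Q/(N j : ℕ)) * (N j:ℕ) : ℕ) = ((m+1)*Q : ℕ) from by
        rw [mul_assoc, Nat.div_mul_cancel (hdvd j)]]
      ring
    set u : ℕ → ℍ := fun m => ModularGroup.S • τ2 m with hu
    have hucoe : ∀ m, ((u m : ℂ)) = (-((τ2 m : ℂ)))⁻¹ := by
      intro m
      rw [hu]
      simp only
      rw [UpperHalfPlane.modular_S_smul]
    have hre2 : ∀ m : ℕ, ((τ2 m : ℂ)).re = (((m+1)*Q : ℕ) : ℝ) := by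
      intro m
      show ((((m+1)*Q : ℕ) : ℂ) + Complex.I * ((((m:ℝ)+1)⁻¹ : ℝ) : ℂ)).re = _
      rw [Complex.add_re, Complex.natCast_re]
      simp [Complex.mul_re]
    have hnorm2 : ∀ m : ℕ, ((m:ℝ)+1) ≤ ‖((τ2 m : ℂ))‖ := by
      intro m
      have h1 : ((m:ℝ)+1) ≤ (((m+1)*Q : ℕ) : ℝ) := by
        have : (m+1) ≤ (m+1)*Q := Nat.le_mul_of_pos_right _ hQpos
        exact_mod_cast this
      calc ((m:ℝ)+1) ≤ (((m+1)*Q : ℕ) : ℝ) := h1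
        _ = ((τ2 m : ℂ)).re := (hre2 m).symm
        _ ≤ |((τ2 m : ℂ)).re| := le_abs_self _
        _ ≤ ‖((τ2 m : ℂ))‖ := Complex.abs_re_le_norm _
        _ = ‖((τ2 m : ℂ))‖ := rfl
    have hLHS : Tendsto (fun m => F i (u m)) atTop (𝓝 (Gf (a i) (N i) 0)) := by
      apply hlim i u
      apply squeeze_zero_norm (a := fun m : ℕ => ((m:ℝ)+1)⁻¹)
      · intro m
        rw [hucoe m, norm_inv, norm_neg]
        exact inv_anti₀ (by positivity) (hnorm2 m)
      · have := tendsto_one_div_add_atTop_nhds_zero_nat (𝕜 := ℝ)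
        simpa [one_div] using this
    have hRHS : Tendsto
        (fun m => ∑ j, ((ρ ModularGroup.S : Matrix (Fin r) (Fin r) ℂ) i j) * F j (σ m)) atTop
        (𝓝 (∑ j, ((ρ ModularGroup.S : Matrix (Fin r) (Fin r) ℂ) i j) * Gf (a j) (N j) 0)) := by
      apply tendsto_finset_sum
      intro j _
      apply Tendsto.const_mul
      apply hlim j σ
      apply squeeze_zero_norm (a := fun m : ℕ => ((m:ℝ)+1)⁻¹)
      · intro m
        show ‖Complex.I * ((((m:ℝ)+1)⁻¹ : ℝ) : ℂ)‖ ≤ _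
        rw [norm_mul, Complex.norm_I, one_mul, Complex.norm_real, Real.norm_eq_abs,
          _root_.abs_of_nonneg (by positivity : (0:ℝ) ≤ ((m:ℝ)+1)⁻¹)]
      · have := tendsto_one_div_add_atTop_nhds_zero_nat (𝕜 := ℝ)
        simpa [one_div] using this
    have heq : ∀ m, F i (u m)
        = ∑ j, ((ρ ModularGroup.S : Matrix (Fin r) (Fin r) ℂ) i j) * F j (σ m) := by
      intro m
      rw [hu]
      simp only
      rw [htr ModularGroup.S (τ2 m) i]
      exact Finset.sum_congr rfl fun j _ => by rw [hFper j m]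
    exact tendsto_nhds_unique (hLHS.congr heq) hRHS
  -- conclude L = a₀
  have hLa : ∀ j, (∑' n, a j n) = a j 0 := by
    have hvec : ∀ j, Gf (a j) (N j) 0 = ((a j 0 : ℝ) : ℂ) := by
      set v : Fin r → ℂ := fun j => Gf (a j) (N j) 0 - ((a j 0 : ℝ) : ℂ) with hv
      have hMv : (ρ ModularGroup.S : Matrix (Fin r) (Fin r) ℂ) *ᵥ v = 0 := by
        funext i
        show ∑ j, (ρ ModularGroup.S : Matrix (Fin r) (Fin r) ℂ) i j * v j = 0
        simp only [hv, mul_sub, Finset.sum_sub_distrib]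
        rw [← hrel1 i, ← hrel2 i, sub_self]
      have h2 : v = 0 := by
        have h3 := congrArg
          (fun w => (((ρ ModularGroup.S)⁻¹ : Matrix.GeneralLinearGroup (Fin r) ℂ) :
            Matrix (Fin r) (Fin r) ℂ) *ᵥ w) hMv
        rw [Matrix.mulVec_mulVec, Matrix.mulVec_zero] at h3
        rwa [show (((ρ ModularGroup.S)⁻¹ : Matrix.GeneralLinearGroup (Fin r) ℂ) :
            Matrix (Fin r) (Fin r) ℂ) * ((ρ ModularGroup.S : Matrix (Fin r) (Fin r) ℂ)) = 1
          from Units.inv_mul _, Matrix.one_mulVec] at h3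
      intro j
      have h4 := congrFun h2 j
      simp only [hv, Pi.zero_apply, sub_eq_zero] at h4
      exact h4
    intro j
    have h1 := hvec j
    rw [Gf_zero] at h1
    exact_mod_cast h1
  -- vanishing of positive coefficients
  have hzero : ∀ (i : Fin r) (n : ℕ), 1 ≤ n → a i n = 0 := by
    intro i n hn
    have h1 : a i 0 + a i n ≤ ∑' m, a i m := by
      rw [← Finset.sum_pair (show (0 : ℕ) ≠ n by omega)]
      exact sum_le_hasSum _ (fun m _ => hnonneg i m) (hsum i).hasSum
    have h2 := hLa i
    linarith [hnonneg i n]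
  -- constancy
  have hconst : ∀ (i : Fin r) (τ : ℍ), F i τ = ((a i 0 : ℝ) : ℂ) := by
    intro i τ
    have h1 := hexp' i τ
    have he : trm (a i) (N i) ↑τ = fun n => if n = 0 then ((a i 0 : ℝ) : ℂ) else 0 := by
      funext n
      cases n with
      | zero => rw [trm]; simp
      | succ n => rw [trm]; simp [hzero i (n + 1) (by omega)]
    rw [he] at h1
    exact h1.unique (hasSum_ite_eq 0 _)
  exact ⟨fun i τ₁ τ₂ => by rw [hconst i τ₁, hconst i τ₂], hzero⟩
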